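/- Let a ∈ ℂ and B > 0 a real number. Then sup over α ≥ 0 and β ∈ ℂ of [Real.log (1 + α) − α + 2 * Real.sqrt (1 + α) * (starRingEnd ℂ β * a).re − Complex.abs β ^ 2 * (Complex.abs a ^ 2 + B)] equals Real.log (1 + Complex.abs a ^ 2 / B); moreover every pair (α, β) with α ≥ 0 gives a value at most Real.log (1 + Complex.abs a ^ 2 / B), and equality holds at α⋆ = Complex.abs a ^ 2 / B and β⋆ = Real.sqrt (1 + α⋆) * a / (Complex.abs a ^ 2 + B). -/

import Mathlib

lemma beta_step (a β : ℂ) (t C : ℝ) (hC : 0 < C) :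
    2 * t * (starRingEnd ℂ β * a).re - ‖β‖ ^ 2 * C
      ≤ t ^ 2 * ‖a‖ ^ 2 / C := by
  have h1 : ‖β‖ ^ 2 = β.re ^ 2 + β.im ^ 2 := by
    rw [Complex.sq_norm, Complex.normSq_apply]; ring
  have h2 : ‖a‖ ^ 2 = a.re ^ 2 + a.im ^ 2 := by
    rw [Complex.sq_norm, Complex.normSq_apply]; ring
  have h3 : (starRingEnd ℂ β * a).re = β.re * a.re + β.im * a.im := by
    simp [Complex.mul_re]
  rw [h1, h2, h3, le_div_iff₀ hC]
  nlinarith [sq_nonneg (C * β.re - t * a.re), sq_nonneg (C * β.im - t * a.im), hC.le, sq_nonneg β.re, sq_nonneg β.im, mul_pos hC hC]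

lemma alpha_step (α s : ℝ) (hα : 0 ≤ α) (hs : 0 ≤ s) :
    Real.log (1 + α) - α + (1 + α) * s / (1 + s) ≤ Real.log (1 + s) := by
  have h1s : (0:ℝ) < 1 + s := by linarith
  have h1a : (0:ℝ) < 1 + α := by linarith
  have hlog : Real.log ((1 + α) / (1 + s)) ≤ (1 + α) / (1 + s) - 1 :=
    Real.log_le_sub_one_of_pos (by positivity)
  rw [Real.log_div (by positivity) (by positivity)] at hlog
  have heq : (1 + α) / (1 + s) - 1 = (α - s) / (1 + s) := by field_simp; ring
  rw [heq] at hlog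
  have h2 : (α - s) / (1 + s) = α - (1 + α) * s / (1 + s) := by field_simp; ring
  linarith [hlog, h2]

lemma eq_step (a : ℂ) (B : ℝ) (hB : 0 < B) :
    Real.log (1 + (‖a‖ ^ 2 / B)) - (‖a‖ ^ 2 / B)
        + 2 * Real.sqrt (1 + (‖a‖ ^ 2 / B)) *
            (starRingEnd ℂ ((Real.sqrt (1 + (‖a‖ ^ 2 / B)) : ℂ) * a
                / ((‖a‖ ^ 2 + B : ℝ) : ℂ)) * a).re
        - ‖(Real.sqrt (1 + (‖a‖ ^ 2 / B)) : ℂ) * a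
                / ((‖a‖ ^ 2 + B : ℝ) : ℂ)‖ ^ 2 * (‖a‖ ^ 2 + B)
      = Real.log (1 + ‖a‖ ^ 2 / B) := by
  set s : ℝ := ‖a‖ ^ 2 / B with hs
  set t : ℝ := Real.sqrt (1 + s) with ht
  set C : ℝ := ‖a‖ ^ 2 + B with hC
  have hCpos : 0 < C := by positivity
  have hspos : 0 ≤ s := by positivity
  have ht2 : t ^ 2 = 1 + s := Real.sq_sqrt (by linarith)
  have htnn : 0 ≤ t := Real.sqrt_nonneg _
  have hre : (starRingEnd ℂ ((t : ℂ) * a / (C : ℂ)) * a).re = t * ‖a‖ ^ 2 / C := by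
    have : starRingEnd ℂ ((t : ℂ) * a / (C : ℂ)) * a
        = ((t * ‖a‖ ^ 2 / C : ℝ) : ℂ) := by
      rw [map_div₀, map_mul]
      simp only [Complex.conj_ofReal]
      rw [div_mul_eq_mul_div, mul_assoc, ← Complex.normSq_eq_conj_mul_self]
      push_cast [← Complex.sq_norm]
      ring
    rw [this, Complex.ofReal_re]
  have habs : ‖(t : ℂ) * a / (C : ℂ)‖ ^ 2 = t ^ 2 * ‖a‖ ^ 2 / C ^ 2 := by
    rw [norm_div, norm_mul, Complex.norm_of_nonneg htnn,
      Complex.norm_of_nonneg hCpos.le]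
    field_simp
  rw [hre, habs]
  have hkey : (1 + s) * ‖a‖ ^ 2 / C = s := by
    rw [hs, hC]; field_simp; ring
  have hCne : C ≠ 0 := hCpos.ne'
  have h4 : 2 * t * (t * ‖a‖ ^ 2 / C) - t ^ 2 * ‖a‖ ^ 2 / C ^ 2 * C
      = t ^ 2 * ‖a‖ ^ 2 / C := by
    field_simp; ring
  rw [ht2] at h4
  rw [ht2]
  linarith [h4, hkey]


/-- Combined correctness of the two FP transforms: for signal coefficient `a`
and interference-plus-noise power `B > 0`, the doubly-transformed objective is
globally upper bounded by the rate `log(1 + |a|²/B)`, attains it at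
`α⋆ = |a|²/B`, `β⋆ = √(1+α⋆)·a/(|a|²+B)`, and hence its supremum over
`α ≥ 0, β ∈ ℂ` equals the rate. -/
theorem stmt_6 (a : ℂ) (B : ℝ) (hB : 0 < B) :
    (∀ α : ℝ, 0 ≤ α → ∀ β : ℂ,
      Real.log (1 + α) - α + 2 * Real.sqrt (1 + α) * (starRingEnd ℂ β * a).re
          - ‖β‖ ^ 2 * (‖a‖ ^ 2 + B)
        ≤ Real.log (1 + ‖a‖ ^ 2 / B)) ∧
    (Real.log (1 + (‖a‖ ^ 2 / B)) - (‖a‖ ^ 2 / B)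
        + 2 * Real.sqrt (1 + (‖a‖ ^ 2 / B)) *
            (starRingEnd ℂ ((Real.sqrt (1 + (‖a‖ ^ 2 / B)) : ℂ) * a
                / ((‖a‖ ^ 2 + B : ℝ) : ℂ)) * a).re
        - ‖(Real.sqrt (1 + (‖a‖ ^ 2 / B)) : ℂ) * a
                / ((‖a‖ ^ 2 + B : ℝ) : ℂ)‖ ^ 2 * (‖a‖ ^ 2 + B)
      = Real.log (1 + ‖a‖ ^ 2 / B)) ∧
    IsGreatest
      {x : ℝ | ∃ α : ℝ, ∃ β : ℂ, 0 ≤ α ∧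
        x = Real.log (1 + α) - α + 2 * Real.sqrt (1 + α) * (starRingEnd ℂ β * a).re
              - ‖β‖ ^ 2 * (‖a‖ ^ 2 + B)}
      (Real.log (1 + ‖a‖ ^ 2 / B)) := by
  have hub : ∀ α : ℝ, 0 ≤ α → ∀ β : ℂ,
      Real.log (1 + α) - α + 2 * Real.sqrt (1 + α) * (starRingEnd ℂ β * a).re
          - ‖β‖ ^ 2 * (‖a‖ ^ 2 + B)
        ≤ Real.log (1 + ‖a‖ ^ 2 / B) := by
    intro α hα β
    have hCpos : 0 < ‖a‖ ^ 2 + B := by positivity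
    have hspos : (0:ℝ) ≤ ‖a‖ ^ 2 / B := by positivity
    have hb := beta_step a β (Real.sqrt (1 + α)) (‖a‖ ^ 2 + B) hCpos
    have ht2 : Real.sqrt (1 + α) ^ 2 = 1 + α := Real.sq_sqrt (by linarith)
    rw [ht2] at hb
    have hfrac : (1 + α) * ‖a‖ ^ 2 / (‖a‖ ^ 2 + B)
        = (1 + α) * (‖a‖ ^ 2 / B) / (1 + ‖a‖ ^ 2 / B) := by
      rw [div_eq_div_iff hCpos.ne' (by positivity : (0:ℝ) < 1 + ‖a‖ ^ 2 / B).ne']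
      field_simp
      ring
    rw [hfrac] at hb
    have ha := alpha_step α (‖a‖ ^ 2 / B) hα hspos
    linarith [hb, ha]
  refine ⟨hub, eq_step a B hB, ⟨?_, ?_⟩⟩
  · exact ⟨‖a‖ ^ 2 / B, (Real.sqrt (1 + ‖a‖ ^ 2 / B) : ℂ) * a
        / ((‖a‖ ^ 2 + B : ℝ) : ℂ), by positivity, (eq_step a B hB).symm⟩
  · rintro x ⟨α, β, hα, rfl⟩
    exact hub α hα β
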